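/- In the one-dimensional local ring R = k[x,z]/(x^2 z, z^2) localized at (x,z), the element x is a parameter, y = x^2 is a parameter, and (x^2) : x = (x); hence the multiplication-by-x map R/(x) → R/(x^2) is injective even though R is not Cohen–Macaulay. -/

import Mathlib

set_option synthInstance.maxHeartbeats 1000000
set_option maxHeartbeats 2000000

open MvPolynomial

/-- The defining ideal `(x²z, z²)` of `k[x,z]`. -/
noncomputable def defIdeal18 (k : Type) [Field k] : Ideal (MvPolynomial (Fin 2) k) :=
  Ideal.span {X 0 ^ 2 * X 1, X 1 ^ 2}

/-- The ring `k[x,z]/(x²z, z²)`. -/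
abbrev QR18 (k : Type) [Field k] : Type :=
  MvPolynomial (Fin 2) k ⧸ defIdeal18 k

/-- The maximal ideal `(x,z)` of `k[x,z]/(x²z, z²)`. -/
noncomputable def mQ18 (k : Type) [Field k] : Ideal (QR18 k) :=
  Ideal.span {Ideal.Quotient.mk (defIdeal18 k) (X 0),
    Ideal.Quotient.mk (defIdeal18 k) (X 1)}

/-- The image of a polynomial in the localization of `QR18 k` at `mQ18 k`. -/
noncomputable def toLoc18 (k : Type) [Field k] [hp : (mQ18 k).IsPrime]
    (f : MvPolynomial (Fin 2) k) : Localization.AtPrime (mQ18 k) :=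
  algebraMap (QR18 k) (Localization.AtPrime (mQ18 k)) (Ideal.Quotient.mk (defIdeal18 k) f)

section
variable (k : Type) [Field k]

lemma nf18 (f : MvPolynomial (Fin 2) k) :
    ∃ (c0 c1 : k) (P S : MvPolynomial (Fin 2) k),
      f = C c0 + C c1 * X 1 + X 0 * P + X 1 ^ 2 * S := by
  induction f using MvPolynomial.induction_on with
  | C a => exact ⟨a, 0, 0, 0, by rw [map_zero]; ring⟩
  | add p q hp hq =>
    obtain ⟨a0, a1, P, S, rfl⟩ := hp
    obtain ⟨b0, b1, Q, T, rfl⟩ := hq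
    exact ⟨a0 + b0, a1 + b1, P + Q, S + T, by rw [map_add, map_add]; ring⟩
  | mul_X p i hp =>
    obtain ⟨a0, a1, P, S, rfl⟩ := hp
    fin_cases i <;> simp only [Fin.zero_eta, Fin.mk_one]
    · exact ⟨0, 0, C a0 + C a1 * X 1 + X 0 * P + X 1 ^ 2 * S, 0, by rw [map_zero]; ring⟩
    · exact ⟨0, a0, P * X 1, C a1 + X 1 * S, by rw [map_zero]; ring⟩

noncomputable abbrev T18 : Type := DualNumber (DualNumber k)

noncomputable def A18 : T18 k := TrivSqZeroExt.inl DualNumber.eps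
noncomputable def B18 : T18 k := DualNumber.eps

lemma A_sq : A18 k * A18 k = 0 := by
  rw [A18, TrivSqZeroExt.inl_mul_inl, DualNumber.eps_mul_eps, TrivSqZeroExt.inl_zero]

lemma B_sq : B18 k * B18 k = 0 := DualNumber.eps_mul_eps

lemma AB18 : A18 k * B18 k = TrivSqZeroExt.inr DualNumber.eps := by
  rw [A18, B18]
  nth_rewrite 2 [DualNumber.eps]
  rw [TrivSqZeroExt.inl_mul_inr, smul_eq_mul, mul_one]

lemma algT (c : k) : algebraMap k (T18 k) c = TrivSqZeroExt.inl (TrivSqZeroExt.inl c) := by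
  rw [TrivSqZeroExt.algebraMap_eq_inl']
  norm_cast

lemma extract2 (c0 c1 : k)
    (h : algebraMap k (T18 k) c0 * A18 k + algebraMap k (T18 k) c1 * (A18 k * B18 k) = 0) :
    c0 = 0 ∧ c1 = 0 := by
  rw [AB18, algT, algT, A18, TrivSqZeroExt.inl_mul_inl, TrivSqZeroExt.inl_mul_inr] at h
  have h1 := congrArg TrivSqZeroExt.fst h
  have h2 := congrArg TrivSqZeroExt.snd h
  simp only [TrivSqZeroExt.fst_add, TrivSqZeroExt.snd_add, TrivSqZeroExt.fst_inl,
    TrivSqZeroExt.snd_inl, TrivSqZeroExt.fst_inr, TrivSqZeroExt.snd_inr, TrivSqZeroExt.fst_zero,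
    TrivSqZeroExt.snd_zero, add_zero, zero_add, smul_eq_mul] at h1 h2
  rw [DualNumber.eps, TrivSqZeroExt.inl_mul_inr, smul_eq_mul, mul_one] at h1 h2
  constructor
  · have := congrArg TrivSqZeroExt.snd h1
    simpa only [TrivSqZeroExt.snd_inr, TrivSqZeroExt.snd_zero] using this
  · have := congrArg TrivSqZeroExt.snd h2
    simpa only [TrivSqZeroExt.snd_inr, TrivSqZeroExt.snd_zero] using this

noncomputable def psi18 : MvPolynomial (Fin 2) k →ₐ[k] T18 k :=
  aeval ![A18 k, B18 k]

lemma psi_X0 : psi18 k (X 0) = A18 k := by simp [psi18]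
lemma psi_X1 : psi18 k (X 1) = B18 k := by simp [psi18]

/-- psi kills the defining ideal. -/
lemma psi_defIdeal {f : MvPolynomial (Fin 2) k} (hf : f ∈ defIdeal18 k) : psi18 k f = 0 := by
  rw [defIdeal18, Ideal.mem_span_pair] at hf
  obtain ⟨a, b, rfl⟩ := hf
  rw [map_add, map_mul, map_mul, map_mul, map_pow, map_pow, psi_X0, psi_X1]
  rw [pow_two, pow_two, A_sq, B_sq]
  ring

lemma psi_nf (c0 c1 : k) (P S : MvPolynomial (Fin 2) k) :
    psi18 k (C c0 + C c1 * X 1 + X 0 * P + X 1 ^ 2 * S) =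
      algebraMap k (T18 k) c0 + algebraMap k (T18 k) c1 * B18 k + A18 k * psi18 k P := by
  rw [map_add, map_add, map_add, map_mul, map_mul, map_mul, map_pow, psi_X0, psi_X1]
  rw [algHom_C, algHom_C]
  rw [pow_two, B_sq]
  ring

/-- (I2): membership extraction for the colon computation. -/
lemma ext_colon (F G : MvPolynomial (Fin 2) k)
    (h : F * X 0 - G * X 0 ^ 2 ∈ defIdeal18 k) :
    F ∈ Ideal.span ({X 0, X 1 ^ 2} : Set (MvPolynomial (Fin 2) k)) := by
  obtain ⟨c0, c1, P, S, rfl⟩ := nf18 k F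
  have h0 := psi_defIdeal k h
  rw [map_sub, map_mul, map_mul, map_pow, psi_X0, psi_nf] at h0
  have h0' : algebraMap k (T18 k) c0 * A18 k + algebraMap k (T18 k) c1 * (A18 k * B18 k) = 0 := by
    linear_combination h0 + (psi18 k G - psi18 k P) * A_sq k
  obtain ⟨hc0, hc1⟩ := extract2 k c0 c1 h0'
  rw [hc0, hc1, C_0]
  rw [Ideal.mem_span_pair]
  exact ⟨P, S, by ring⟩

/-- (I1): annihilator extraction. -/
lemma ext_ann (c : MvPolynomial (Fin 2) k)
    (h : c * (X 0 * X 1) ∈ defIdeal18 k) : constantCoeff c = 0 := by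
  obtain ⟨c0, c1, P, S, rfl⟩ := nf18 k c
  have h0 := psi_defIdeal k h
  rw [map_mul, map_mul, psi_X0, psi_X1, psi_nf] at h0
  have h0' : algebraMap k (T18 k) 0 * A18 k + algebraMap k (T18 k) c0 * (A18 k * B18 k) = 0 := by
    rw [map_zero]
    linear_combination h0 - algebraMap k (T18 k) c1 * A18 k * B_sq k
      - B18 k * psi18 k P * A_sq k
  have hc0 := (extract2 k 0 c0 h0').2
  simp [hc0]

/-- Constant coefficient characterization of the maximal ideal upstairs. -/
lemma mem_span_XX_iff (f : MvPolynomial (Fin 2) k) :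
    f ∈ Ideal.span ({X 0, X 1} : Set (MvPolynomial (Fin 2) k)) ↔ constantCoeff f = 0 := by
  constructor
  · rw [Ideal.mem_span_pair]
    rintro ⟨a, b, rfl⟩
    simp
  · intro hf
    obtain ⟨c0, c1, P, S, rfl⟩ := nf18 k f
    have hc0 : c0 = 0 := by
      simpa using hf
    rw [hc0, map_zero, Ideal.mem_span_pair]
    exact ⟨P, C c1 + X 1 * S, by ring⟩

lemma defIdeal_le_span : defIdeal18 k ≤ Ideal.span ({X 0, X 1} : Set (MvPolynomial (Fin 2) k)) := by
  rw [defIdeal18, Ideal.span_le]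
  rintro g (rfl | rfl)
  · exact Ideal.mem_span_pair.mpr ⟨X 0 * X 1, 0, by ring⟩
  · exact Ideal.mem_span_pair.mpr ⟨0, X 1, by ring⟩

noncomputable def phi18 : MvPolynomial (Fin 2) k →ₐ[k] Polynomial k :=
  aeval ![Polynomial.X, 0]

lemma phi_X0 : phi18 k (X 0) = Polynomial.X := by simp [phi18]
lemma phi_X1 : phi18 k (X 1) = 0 := by simp [phi18]

lemma phi_section (f : MvPolynomial (Fin 2) k) :
    f - Polynomial.aeval (X 0 : MvPolynomial (Fin 2) k) (phi18 k f)
      ∈ Ideal.span ({X 1} : Set (MvPolynomial (Fin 2) k)) := by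
  induction f using MvPolynomial.induction_on with
  | C a => simp [algHom_C, Polynomial.aeval_C, algebraMap_eq]
  | add p q hp hq =>
    rw [map_add, map_add]
    have : p + q - (Polynomial.aeval (X 0 : MvPolynomial (Fin 2) k) (phi18 k p)
        + Polynomial.aeval (X 0 : MvPolynomial (Fin 2) k) (phi18 k q))
        = (p - Polynomial.aeval (X 0 : MvPolynomial (Fin 2) k) (phi18 k p))
          + (q - Polynomial.aeval (X 0 : MvPolynomial (Fin 2) k) (phi18 k q)) := by ring
    rw [this]
    exact Ideal.add_mem _ hp hq
  | mul_X p i hp =>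
    fin_cases i <;> simp only [Fin.zero_eta, Fin.mk_one]
    · rw [map_mul, phi_X0, map_mul, Polynomial.aeval_X]
      have : p * X 0 - Polynomial.aeval (X 0 : MvPolynomial (Fin 2) k) (phi18 k p) * X 0
          = (p - Polynomial.aeval (X 0 : MvPolynomial (Fin 2) k) (phi18 k p)) * X 0 := by ring
      rw [this]
      exact Ideal.mul_mem_right _ _ hp
    · rw [map_mul, phi_X1, mul_zero, map_zero, sub_zero]
      exact Ideal.mem_span_singleton.mpr ⟨p, mul_comm p (X 1)⟩

lemma ker_phi : RingHom.ker (phi18 k : MvPolynomial (Fin 2) k →+* Polynomial k)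
    = Ideal.span ({X 1} : Set (MvPolynomial (Fin 2) k)) := by
  apply le_antisymm
  · intro f hf
    rw [RingHom.mem_ker] at hf
    have := phi_section k f
    rw [show ((phi18 k : MvPolynomial (Fin 2) k →+* Polynomial k) f : Polynomial k)
      = phi18 k f from rfl] at hf
    rw [hf, map_zero, sub_zero] at this
    exact this
  · rw [Ideal.span_le]
    rintro g rfl
    simp only [SetLike.mem_coe, RingHom.mem_ker]
    exact phi_X1 k

lemma defIdeal_le_ker_phi : defIdeal18 k ≤ RingHom.ker (phi18 k : MvPolynomial (Fin 2) k →+* Polynomial k) := by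
  rw [ker_phi, defIdeal18, Ideal.span_le]
  rintro g (rfl | rfl)
  · exact Ideal.mem_span_singleton.mpr ⟨X 0 ^ 2, by ring⟩
  · exact Ideal.mem_span_singleton.mpr ⟨X 1, by ring⟩


lemma X1sq_mem : (X 1 : MvPolynomial (Fin 2) k) ^ 2 ∈ defIdeal18 k := by
  rw [defIdeal18]
  exact Ideal.mem_span_pair.mpr ⟨0, 1, by ring⟩

lemma X0sqX1_mem : (X 0 : MvPolynomial (Fin 2) k) ^ 2 * X 1 ∈ defIdeal18 k := by
  rw [defIdeal18]
  exact Ideal.mem_span_pair.mpr ⟨1, 0, by ring⟩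

lemma X0X1sq_mem : (X 0 : MvPolynomial (Fin 2) k) * X 1 ^ 2 ∈ defIdeal18 k :=
  Ideal.mul_mem_left _ _ (X1sq_mem k)

lemma mQ_eq_map :
    mQ18 k = Ideal.map (Ideal.Quotient.mk (defIdeal18 k))
      (Ideal.span ({X 0, X 1} : Set (MvPolynomial (Fin 2) k))) := by
  rw [Ideal.map_span, Set.image_insert_eq, Set.image_singleton, mQ18]

lemma mem_mQ_iff (f : MvPolynomial (Fin 2) k) :
    Ideal.Quotient.mk (defIdeal18 k) f ∈ mQ18 k ↔ constantCoeff f = 0 := by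
  rw [mQ_eq_map]
  constructor
  · intro hf
    obtain ⟨g, hg, hgf⟩ := Ideal.mem_map_iff_of_surjective _ Ideal.Quotient.mk_surjective |>.mp hf
    have hsub : f - g ∈ defIdeal18 k := by
      have h := Ideal.Quotient.eq.mp hgf
      simpa [neg_sub] using (defIdeal18 k).neg_mem h
    have h1 : constantCoeff g = 0 := (mem_span_XX_iff k g).mp hg
    have h2 : constantCoeff (f - g) = 0 :=
      (mem_span_XX_iff k (f - g)).mp (defIdeal_le_span k hsub)
    have : constantCoeff f = constantCoeff (f - g) + constantCoeff g := by
      rw [← map_add]; ring_nf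
    rw [this, h1, h2, add_zero]
  · intro hf
    exact Ideal.mem_map_of_mem _ ((mem_span_XX_iff k f).mpr hf)

noncomputable def sigma18 : QR18 k →+* Polynomial k :=
  Ideal.Quotient.lift (defIdeal18 k) (phi18 k : MvPolynomial (Fin 2) k →+* Polynomial k)
    (fun _ ha => RingHom.mem_ker.mp (defIdeal_le_ker_phi k ha))

lemma sigma_mk (f : MvPolynomial (Fin 2) k) :
    sigma18 k (Ideal.Quotient.mk (defIdeal18 k) f) = phi18 k f :=
  Ideal.Quotient.lift_mk _ _ _

lemma sigma_surjective : Function.Surjective (sigma18 k) := by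
  intro p
  refine ⟨Ideal.Quotient.mk (defIdeal18 k) (Polynomial.aeval (X 0 : MvPolynomial (Fin 2) k) p), ?_⟩
  rw [sigma_mk]
  rw [← Polynomial.aeval_algHom_apply (phi18 k) (X 0 : MvPolynomial (Fin 2) k) p, phi_X0]
  exact Polynomial.aeval_X_left_apply p

lemma ker_sigma : RingHom.ker (sigma18 k)
    = Ideal.span {Ideal.Quotient.mk (defIdeal18 k) (X 1)} := by
  rw [sigma18]
  erw [Ideal.ker_quotient_lift (phi18 k : MvPolynomial (Fin 2) k →+* Polynomial k) (defIdeal_le_ker_phi k)]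
  rw [ker_phi, Ideal.map_span, Set.image_singleton]

lemma mkX1_sq_zero : Ideal.Quotient.mk (defIdeal18 k) (X 1) ^ 2 = 0 := by
  rw [← map_pow, Ideal.Quotient.eq_zero_iff_mem]
  exact X1sq_mem k

end


section
variable (k : Type) [Field k] [hp : (mQ18 k).IsPrime]

lemma toLoc_def (f : MvPolynomial (Fin 2) k) :
    toLoc18 k f = algebraMap (QR18 k) (Localization.AtPrime (mQ18 k))
      (Ideal.Quotient.mk (defIdeal18 k) f) := rfl

lemma mQ18_def : mQ18 k = Ideal.span {Ideal.Quotient.mk (defIdeal18 k) (X 0),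
    Ideal.Quotient.mk (defIdeal18 k) (X 1)} := rfl

lemma maxIdeal_eq :
    IsLocalRing.maximalIdeal (Localization.AtPrime (mQ18 k)) =
      Ideal.span {toLoc18 k (X 0), toLoc18 k (X 1)} := by
  rw [← Localization.AtPrime.map_eq_maximalIdeal (hI := hp)]
  refine Eq.trans (Ideal.map_span _ _) ?_
  rw [Set.image_insert_eq, Set.image_singleton]
  rfl

lemma zsq_zero : toLoc18 k (X 1) * toLoc18 k (X 1) = 0 := by
  rw [toLoc_def, ← map_mul, ← map_mul, ← pow_two, Ideal.Quotient.eq_zero_iff_mem.mpr (X1sq_mem k),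
    map_zero]

lemma xsq_eq : toLoc18 k (X 0 ^ 2) = toLoc18 k (X 0) * toLoc18 k (X 0) := by
  rw [toLoc_def, toLoc_def, ← map_mul, ← map_mul, ← pow_two]

/-- no chain of three primes in the localization -/
lemma no_chain18 (q0 q1 q2 : PrimeSpectrum (Localization.AtPrime (mQ18 k)))
    (h01 : q0 < q1) (h12 : q1 < q2) : False := by
  classical
  haveI i0 := q0.2
  haveI i1 := q1.2
  haveI i2 := q2.2
  set R := Localization.AtPrime (mQ18 k)
  have hmapcomap : ∀ q : PrimeSpectrum R,
      Ideal.map (algebraMap (QR18 k) R) (Ideal.comap (algebraMap (QR18 k) R) q.asIdeal)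
        = q.asIdeal :=
    fun q => IsLocalization.map_comap (mQ18 k).primeCompl R q.asIdeal
  set P0 := Ideal.comap (algebraMap (QR18 k) R) q0.asIdeal with hP0def
  set P1 := Ideal.comap (algebraMap (QR18 k) R) q1.asIdeal with hP1def
  set P2 := Ideal.comap (algebraMap (QR18 k) R) q2.asIdeal with hP2def
  haveI hP0p : P0.IsPrime := Ideal.IsPrime.comap _
  haveI hP1p : P1.IsPrime := Ideal.IsPrime.comap _
  haveI hP2p : P2.IsPrime := Ideal.IsPrime.comap _
  have hP01 : P0 < P1 := lt_of_le_of_ne (Ideal.comap_mono h01.le)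
    (fun h => h01.ne (PrimeSpectrum.ext (by rw [← hmapcomap q0, ← hmapcomap q1, ← hP0def, ← hP1def, h])))
  have hP12 : P1 < P2 := lt_of_le_of_ne (Ideal.comap_mono h12.le)
    (fun h => h12.ne (PrimeSpectrum.ext (by rw [← hmapcomap q1, ← hmapcomap q2, ← hP1def, ← hP2def, h])))
  have hP2le : P2 ≤ mQ18 k := by
    have h2 : q2.asIdeal ≤ IsLocalRing.maximalIdeal R := IsLocalRing.le_maximalIdeal q2.2.ne_top
    have h3 := Ideal.comap_mono (f := algebraMap (QR18 k) R) h2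
    exact h3.trans (le_of_eq (Localization.AtPrime.comap_maximalIdeal (hI := hp)))
  -- kernels
  have hker : ∀ (P : Ideal (QR18 k)), P.IsPrime → RingHom.ker (sigma18 k) ≤ P := by
    intro P hP
    rw [ker_sigma, Ideal.span_singleton_le_iff_mem]
    refine hP.mem_of_pow_mem 2 ?_
    rw [mkX1_sq_zero k]
    exact P.zero_mem
  set Q0 := Ideal.map (sigma18 k) P0 with hQ0def
  set Q1 := Ideal.map (sigma18 k) P1 with hQ1def
  set Q2 := Ideal.map (sigma18 k) P2 with hQ2def
  haveI hQ0p : Q0.IsPrime := Ideal.map_isPrime_of_surjective (sigma_surjective k) (hker P0 hP0p)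
  haveI hQ1p : Q1.IsPrime := Ideal.map_isPrime_of_surjective (sigma_surjective k) (hker P1 hP1p)
  haveI hQ2p : Q2.IsPrime := Ideal.map_isPrime_of_surjective (sigma_surjective k) (hker P2 hP2p)
  have hcm : ∀ (P : Ideal (QR18 k)), P.IsPrime →
      Ideal.comap (sigma18 k) (Ideal.map (sigma18 k) P) = P := by
    intro P hP
    rw [Ideal.comap_map_of_surjective (sigma18 k) (sigma_surjective k)]
    exact sup_eq_left.mpr (hker P hP)
  have hQ01 : Q0 < Q1 := lt_of_le_of_ne (Ideal.map_mono hP01.le)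
    (fun h => hP01.ne (by rw [← hcm P0 hP0p, ← hcm P1 hP1p, ← hQ0def, ← hQ1def, h]))
  have hQ12 : Q1 < Q2 := lt_of_le_of_ne (Ideal.map_mono hP12.le)
    (fun h => hP12.ne (by rw [← hcm P1 hP1p, ← hcm P2 hP2p, ← hQ1def, ← hQ2def, h]))
  have hQ2le : Q2 ≤ Ideal.span {(Polynomial.X : Polynomial k)} := by
    refine le_trans (Ideal.map_mono hP2le) ?_
    rw [mQ18_def, Ideal.map_span, Set.image_insert_eq, Set.image_singleton, sigma_mk, sigma_mk,
      phi_X0, phi_X1]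
    rw [Ideal.span_le]
    rintro g (rfl | rfl)
    · exact Ideal.subset_span rfl
    · exact (Ideal.span {(Polynomial.X : Polynomial k)}).zero_mem
  have hQ1nebot : Q1 ≠ ⊥ := by
    intro h
    rw [h] at hQ01
    exact not_lt_bot hQ01
  have hQ1max : Q1.IsMaximal := IsPrime.to_maximal_ideal hQ1nebot
  have hQ2top : Q2 = ⊤ := hQ1max.out.2 Q2 hQ12
  rw [hQ2top] at hQ2le
  have : IsUnit (Polynomial.X : Polynomial k) :=
    Ideal.span_singleton_eq_top.mp (top_le_iff.mp hQ2le)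
  exact Polynomial.not_isUnit_X this

lemma dim18 : ringKrullDim (Localization.AtPrime (mQ18 k)) = 1 := by
  classical
  set R := Localization.AtPrime (mQ18 k)
  -- lower bound chain
  have hP0p : (RingHom.ker (sigma18 k)).IsPrime := RingHom.ker_isPrime _
  have hP0le : RingHom.ker (sigma18 k) ≤ mQ18 k := by
    rw [ker_sigma, Ideal.span_singleton_le_iff_mem, mQ18_def]
    exact Ideal.subset_span (Set.mem_insert_of_mem _ rfl)
  have hdisj : Disjoint ((mQ18 k).primeCompl : Set (QR18 k)) ↑(RingHom.ker (sigma18 k)) :=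
    Set.disjoint_left.mpr (fun a ha hP => ha (hP0le hP))
  have hq0p : (Ideal.map (algebraMap (QR18 k) R) (RingHom.ker (sigma18 k))).IsPrime :=
    IsLocalization.isPrime_of_isPrime_disjoint (mQ18 k).primeCompl R _ hP0p hdisj
  haveI := hq0p
  set q0pt : PrimeSpectrum R := ⟨Ideal.map (algebraMap (QR18 k) R) (RingHom.ker (sigma18 k)), hq0p⟩
  set q1pt : PrimeSpectrum R :=
    ⟨IsLocalRing.maximalIdeal R, (IsLocalRing.maximalIdeal.isMaximal R).isPrime⟩
  have hlt : q0pt < q1pt := by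
    refine lt_of_le_of_ne ?_ ?_
    · show q0pt.asIdeal ≤ q1pt.asIdeal
      rw [show q1pt.asIdeal = IsLocalRing.maximalIdeal R from rfl,
        ← Localization.AtPrime.map_eq_maximalIdeal (hI := hp)]
      exact Ideal.map_mono hP0le
    · intro h
      have hcomap : Ideal.comap (algebraMap (QR18 k) R) q0pt.asIdeal = RingHom.ker (sigma18 k) :=
        IsLocalization.comap_map_of_isPrime_disjoint (mQ18 k).primeCompl R hP0p hdisj
      have hcomap1 : Ideal.comap (algebraMap (QR18 k) R) q1pt.asIdeal = mQ18 k :=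
        Localization.AtPrime.comap_maximalIdeal (hI := hp)
      rw [h, hcomap1] at hcomap
      have hX0 : Ideal.Quotient.mk (defIdeal18 k) (X 0) ∈ RingHom.ker (sigma18 k) := by
        rw [← hcomap, mQ18_def]
        exact Ideal.subset_span (Set.mem_insert _ _)
      rw [RingHom.mem_ker, sigma_mk, phi_X0] at hX0
      exact Polynomial.X_ne_zero hX0
  set pser : LTSeries (PrimeSpectrum R) :=
    ⟨1, ![q0pt, q1pt], by
      intro i
      fin_cases i
      simpa using hlt⟩ with hpser
  apply le_antisymm
  · show Order.krullDim (PrimeSpectrum R) ≤ 1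
    refine iSup_le fun p => ?_
    have hl : p.length ≤ 1 := by
      by_contra hc
      push_neg at hc
      exact no_chain18 k (p.toFun ⟨0, by omega⟩) (p.toFun ⟨1, by omega⟩) (p.toFun ⟨2, by omega⟩)
        (p.strictMono (Fin.mk_lt_mk.mpr (by omega))) (p.strictMono (Fin.mk_lt_mk.mpr (by omega)))
    exact_mod_cast hl
  · have := Order.LTSeries.length_le_krullDim pser
    rw [hpser] at this
    exact_mod_cast this
end


/-- in the one-dimensional local ring
`R = (k[x,z]/(x²z, z²))_{(x,z)}`, the element `x` is a parameter, `y = x²` is a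
parameter, and `(x²) : x = (x)`, so the multiplication-by-`x` map
`R/(x) → R/(x²)` is injective; nevertheless `R` is not Cohen–Macaulay (it has
dimension 1 but depth 0). -/
theorem stmt18 (k : Type) [Field k] [hp : (mQ18 k).IsPrime] :
    ringKrullDim (Localization.AtPrime (mQ18 k)) = 1 ∧
    (Ideal.span {toLoc18 k (X 0)}).radical =
      IsLocalRing.maximalIdeal (Localization.AtPrime (mQ18 k)) ∧
    (Ideal.span {toLoc18 k (X 0 ^ 2)}).radical =
      IsLocalRing.maximalIdeal (Localization.AtPrime (mQ18 k)) ∧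
    Submodule.colon (Ideal.span {toLoc18 k (X 0 ^ 2)}) (Ideal.span {toLoc18 k (X 0)}) =
      Ideal.span {toLoc18 k (X 0)} ∧
    -- depth 0: a nonzero element killed by the maximal ideal, so `R` is not CM
    (∃ w : Localization.AtPrime (mQ18 k), w ≠ 0 ∧
      ∀ s ∈ IsLocalRing.maximalIdeal (Localization.AtPrime (mQ18 k)), s * w = 0) := by
  classical
  haveI : IsRightCancelAdd (Localization.AtPrime (mQ18 k)) :=
    ⟨fun a b c h => by
      have h' : b + a = c + a := h
      calc b = b + a - a := (add_sub_cancel_right b a).symm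
        _ = c + a - a := by rw [h']
        _ = c := add_sub_cancel_right c a⟩
  have hmp : (Ideal.span {toLoc18 k (X 0), toLoc18 k (X 1)}).IsPrime := by
    rw [← maxIdeal_eq k]
    exact (IsLocalRing.maximalIdeal.isMaximal _).isPrime
  have hxmem : toLoc18 k (X 0) ∈ Ideal.span {toLoc18 k (X 0), toLoc18 k (X 1)} :=
    Ideal.subset_span (Set.mem_insert _ _)
  have hzmem : toLoc18 k (X 1) ∈ Ideal.span {toLoc18 k (X 0), toLoc18 k (X 1)} :=
    Ideal.subset_span (Set.mem_insert_of_mem _ rfl)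
  refine ⟨dim18 k, ?_, ?_, ?_, ?_⟩
  · rw [maxIdeal_eq k]
    apply le_antisymm
    · have h1 : Ideal.span {toLoc18 k (X 0)} ≤ Ideal.span {toLoc18 k (X 0), toLoc18 k (X 1)} :=
        Ideal.span_le.mpr (Set.singleton_subset_iff.mpr hxmem)
      have := Ideal.radical_mono h1
      rwa [hmp.radical] at this
    · rw [Ideal.span_le]
      rintro g (rfl | rfl)
      · exact Ideal.le_radical (Ideal.subset_span rfl)
      · exact Ideal.mem_radical_iff.mpr ⟨2, by
          rw [pow_two (toLoc18 k (X 1)), zsq_zero k]; exact Ideal.zero_mem _⟩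
  · rw [maxIdeal_eq k]
    apply le_antisymm
    · have h1 : Ideal.span {toLoc18 k (X 0 ^ 2)} ≤ Ideal.span {toLoc18 k (X 0), toLoc18 k (X 1)} := by
        rw [Ideal.span_le, Set.singleton_subset_iff, SetLike.mem_coe, xsq_eq k]
        exact Ideal.mul_mem_left _ _ hxmem
      have := Ideal.radical_mono h1
      rwa [hmp.radical] at this
    · rw [Ideal.span_le]
      rintro g (rfl | rfl)
      · exact Ideal.mem_radical_iff.mpr ⟨2, by
          rw [pow_two (toLoc18 k (X 0)), ← xsq_eq k]; exact Ideal.subset_span rfl⟩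
      · exact Ideal.mem_radical_iff.mpr ⟨2, by
          rw [pow_two (toLoc18 k (X 1)), zsq_zero k]; exact Ideal.zero_mem _⟩
  · apply le_antisymm
    · intro r hr
      have hrx : r * toLoc18 k (X 0) ∈ Ideal.span {toLoc18 k (X 0 ^ 2)} := by
        have := Submodule.mem_colon.mp hr (toLoc18 k (X 0)) (Ideal.subset_span rfl)
        simpa [smul_eq_mul] using this
      obtain ⟨s, hs⟩ := Ideal.mem_span_singleton'.mp hrx
      obtain ⟨⟨fq, u⟩, hfu⟩ := IsLocalization.surj (M := (mQ18 k).primeCompl) r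
      obtain ⟨⟨gq, v⟩, hgv⟩ := IsLocalization.surj (M := (mQ18 k).primeCompl) s
      set alg := algebraMap (QR18 k) (Localization.AtPrime (mQ18 k)) with halg
      have hs' : s * (alg (Ideal.Quotient.mk (defIdeal18 k) (X 0))
          * alg (Ideal.Quotient.mk (defIdeal18 k) (X 0))) = r * alg (Ideal.Quotient.mk (defIdeal18 k) (X 0)) := by
        have h := hs
        rw [xsq_eq k, toLoc_def] at h
        exact h
      have key : alg (fq * ↑v * Ideal.Quotient.mk (defIdeal18 k) (X 0))
          = alg (gq * ↑u * (Ideal.Quotient.mk (defIdeal18 k) (X 0)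
            * Ideal.Quotient.mk (defIdeal18 k) (X 0))) := by
        rw [map_mul, map_mul, map_mul, map_mul, map_mul, ← hfu, ← hgv]
        linear_combination (-(alg ↑u * alg ↑v)) * hs'
      obtain ⟨c, hc⟩ := (IsLocalization.eq_iff_exists (mQ18 k).primeCompl
        (Localization.AtPrime (mQ18 k))).mp key
      obtain ⟨C, hC⟩ := Ideal.Quotient.mk_surjective (c : QR18 k)
      obtain ⟨F, hF⟩ := Ideal.Quotient.mk_surjective fq
      obtain ⟨G, hG⟩ := Ideal.Quotient.mk_surjective gq
      obtain ⟨U, hU⟩ := Ideal.Quotient.mk_surjective (u : QR18 k)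
      obtain ⟨V, hV⟩ := Ideal.Quotient.mk_surjective (v : QR18 k)
      have hpoly : (C * F * V) * X 0 - (C * G * U) * X 0 ^ 2 ∈ defIdeal18 k := by
        rw [← Ideal.Quotient.eq]
        rw [map_mul, map_mul, map_mul, map_mul, map_mul, map_mul, map_pow, pow_two,
          hC, hF, hV, hG, hU]
        linear_combination hc
      have hmem := ext_colon k (C * F * V) (C * G * U) hpoly
      rw [Ideal.mem_span_pair] at hmem
      obtain ⟨a, b, hab⟩ := hmem
      rw [Ideal.mem_span_singleton']
      have hcuv : (↑c * ↑u * ↑v : QR18 k) ∈ (mQ18 k).primeCompl :=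
        Submonoid.mul_mem _ (Submonoid.mul_mem _ c.2 u.2) v.2
      have hunit : IsUnit (alg (↑c * ↑u * ↑v)) :=
        IsLocalization.map_units _ (⟨_, hcuv⟩ : (mQ18 k).primeCompl)
      obtain ⟨w, hw⟩ := hunit
      have hb0 : Ideal.Quotient.mk (defIdeal18 k) (X 1 ^ 2) = 0 :=
        Ideal.Quotient.eq_zero_iff_mem.mpr (X1sq_mem k)
      have hr2 : r * alg (↑c * ↑u * ↑v) = alg (Ideal.Quotient.mk (defIdeal18 k) a) * toLoc18 k (X 0) := by
        rw [map_mul, map_mul]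
        calc r * (alg ↑c * alg ↑u * alg ↑v) = alg ↑c * alg ↑v * (r * alg ↑u) := by ring
        _ = alg ↑c * alg ↑v * alg fq := by rw [hfu]
        _ = alg (Ideal.Quotient.mk (defIdeal18 k) (C * F * V)) := by
            simp only [map_mul]; rw [hC, hF, hV]; ring
        _ = alg (Ideal.Quotient.mk (defIdeal18 k) (a * X 0 + b * X 1 ^ 2)) := by rw [hab]
        _ = alg (Ideal.Quotient.mk (defIdeal18 k) a) * toLoc18 k (X 0) := by
            rw [map_add, map_mul, map_mul, hb0, mul_zero, add_zero, map_mul, toLoc_def]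
      rw [← hw] at hr2
      refine ⟨alg (Ideal.Quotient.mk (defIdeal18 k) a) * ↑w⁻¹, ?_⟩
      calc alg (Ideal.Quotient.mk (defIdeal18 k) a) * ↑w⁻¹ * toLoc18 k (X 0)
          = (alg (Ideal.Quotient.mk (defIdeal18 k) a) * toLoc18 k (X 0)) * ↑w⁻¹ := by ring
      _ = (r * ↑w) * ↑w⁻¹ := by rw [← hr2]
      _ = r * (↑w * ↑w⁻¹) := by ring
      _ = r := by rw [Units.mul_inv, mul_one]
    · intro r hr
      obtain ⟨t, ht⟩ := Ideal.mem_span_singleton'.mp hr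
      refine Submodule.mem_colon.mpr fun p hp => ?_
      obtain ⟨q, hq⟩ := Ideal.mem_span_singleton'.mp hp
      rw [smul_eq_mul]
      refine Ideal.mem_span_singleton'.mpr ⟨t * q, ?_⟩
      rw [xsq_eq k]
      linear_combination (q * toLoc18 k (X 0)) * ht + r * hq
  · refine ⟨toLoc18 k (X 0 * X 1), ?_, ?_⟩
    · intro h0
      rw [toLoc_def] at h0
      obtain ⟨c, hc⟩ := (IsLocalization.map_eq_zero_iff (mQ18 k).primeCompl
        (Localization.AtPrime (mQ18 k)) _).mp h0
      obtain ⟨C, hC⟩ := Ideal.Quotient.mk_surjective (c : QR18 k)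
      have hz : Ideal.Quotient.mk (defIdeal18 k) (C * (X 0 * X 1)) = 0 := by
        rw [map_mul, hC]; exact hc
      have hmem : C * (X 0 * X 1) ∈ defIdeal18 k := Ideal.Quotient.eq_zero_iff_mem.mp hz
      have hcc := ext_ann k C hmem
      have : (c : QR18 k) ∈ mQ18 k := by rw [← hC]; exact (mem_mQ_iff k C).mpr hcc
      exact c.2 this
    · intro s hs
      rw [maxIdeal_eq k, Ideal.mem_span_pair] at hs
      obtain ⟨a, b, hab⟩ := hs
      have h1 : toLoc18 k (X 0) * toLoc18 k (X 0 * X 1) = 0 := by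
        rw [toLoc_def, toLoc_def, ← map_mul, ← map_mul]
        have hm : (X 0 : MvPolynomial (Fin 2) k) * (X 0 * X 1) ∈ defIdeal18 k := by
          have he : (X 0 : MvPolynomial (Fin 2) k) * (X 0 * X 1) = X 0 ^ 2 * X 1 := by ring
          rw [he]; exact X0sqX1_mem k
        rw [Ideal.Quotient.eq_zero_iff_mem.mpr hm, map_zero]
      have h2 : toLoc18 k (X 1) * toLoc18 k (X 0 * X 1) = 0 := by
        rw [toLoc_def, toLoc_def, ← map_mul, ← map_mul]
        have hm : (X 1 : MvPolynomial (Fin 2) k) * (X 0 * X 1) ∈ defIdeal18 k := by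
          have he : (X 1 : MvPolynomial (Fin 2) k) * (X 0 * X 1) = X 0 * X 1 ^ 2 := by ring
          rw [he]; exact X0X1sq_mem k
        rw [Ideal.Quotient.eq_zero_iff_mem.mpr hm, map_zero]
      rw [← hab]
      linear_combination a * h1 + b * h2
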